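/- Let A be an m×m complex Hurwitz matrix. Then the matrix exponential exp(t·A) tends to the zero matrix as t → ∞; in particular, for every vector x₀ ∈ ℂᵐ, exp(t·A)·x₀ → 0 as t → ∞. -/

import Mathlib

open Matrix Polynomial Filter Topology

/-- A square complex matrix is Hurwitz if every root of its characteristic
polynomial has negative real part. -/
def IsHurwitz {n : Type*} [Fintype n] [DecidableEq n] (A : Matrix n n ℂ) : Prop :=
  ∀ μ : ℂ, A.charpoly.IsRoot μ → μ.re < 0

private lemma exp_smul_one_matrix (m : ℕ) (c : ℂ) :
    NormedSpace.exp (c • (1 : Matrix (Fin m) (Fin m) ℂ)) = Complex.exp c • 1 := by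
  have hs : Summable fun n : ℕ => ((n.factorial : ℂ))⁻¹ * c ^ n := by
    simpa [smul_eq_mul] using NormedSpace.expSeries_summable' (𝕂 := ℂ) c
  rw [NormedSpace.exp_eq_tsum (𝕂 := ℂ)]
  simp_rw [_root_.smul_pow, one_pow, smul_smul]
  rw [Summable.tsum_smul_const hs, Complex.exp_eq_exp_ℂ, NormedSpace.exp_eq_tsum (𝕂 := ℂ)]
  simp [smul_eq_mul]

private lemma coef_tendsto {μ : ℂ} (hμ : μ.re < 0) (k : ℕ) :
    Tendsto (fun t : ℝ => Complex.exp ((t : ℂ) * μ) * (((k.factorial : ℂ))⁻¹ * (t : ℂ) ^ k))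
      atTop (𝓝 0) := by
  set c : ℝ := -μ.re with hc
  have hc0 : 0 < c := by simp [hc]; linarith
  have h1 : Tendsto (fun t : ℝ => c * t) atTop atTop :=
    Tendsto.const_mul_atTop hc0 tendsto_id
  have h2 : Tendsto
      (fun t : ℝ => (((k.factorial : ℝ))⁻¹ * c⁻¹ ^ k) * ((c * t) ^ k * Real.exp (-(c * t))))
      atTop (𝓝 0) := by
    have := ((Real.tendsto_pow_mul_exp_neg_atTop_nhds_zero k).comp h1).const_mul
      (((k.factorial : ℝ))⁻¹ * c⁻¹ ^ k)
    simpa using this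
  apply squeeze_zero_norm' ?_ h2
  filter_upwards [eventually_ge_atTop (0 : ℝ)] with t ht
  have habs : ‖Complex.exp ((t : ℂ) * μ) * (((k.factorial : ℂ))⁻¹ * (t : ℂ) ^ k)‖
      = Real.exp (t * μ.re) * (((k.factorial : ℝ))⁻¹ * t ^ k) := by
    rw [norm_mul, norm_mul, norm_pow, Complex.norm_exp]
    simp [Complex.norm_real, abs_of_nonneg ht]
  rw [habs]
  have hck : c⁻¹ ^ k * c ^ k = 1 := by
    rw [← mul_pow, inv_mul_cancel₀ hc0.ne', one_pow]
  have : -(c * t) = t * μ.re := by simp [hc]; ring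
  rw [this, mul_pow]
  calc Real.exp (t * μ.re) * (((k.factorial : ℝ))⁻¹ * t ^ k)
      = ((k.factorial : ℝ))⁻¹ * ((c⁻¹ ^ k * c ^ k) * (t ^ k * Real.exp (t * μ.re))) := by
        rw [hck]; ring
    _ = ((k.factorial : ℝ))⁻¹ * c⁻¹ ^ k * (c ^ k * t ^ k * Real.exp (t * μ.re)) := by ring
    _ ≤ _ := le_of_eq (by ring)

private lemma exp_mulVec_tendsto {m : ℕ} (A : Matrix (Fin m) (Fin m) ℂ) {μ : ℂ}
    (hμ : μ.re < 0) (K : ℕ) (x : Fin m → ℂ)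
    (hx : ((A - μ • 1) ^ K).mulVec x = 0) :
    Tendsto (fun t : ℝ => (NormedSpace.exp ((t : ℂ) • A)).mulVec x) atTop (𝓝 0) := by
  letI : SeminormedRing (Matrix (Fin m) (Fin m) ℂ) := Matrix.linftyOpSemiNormedRing
  letI : NormedRing (Matrix (Fin m) (Fin m) ℂ) := Matrix.linftyOpNormedRing
  letI : NormedAlgebra ℂ (Matrix (Fin m) (Fin m) ℂ) := Matrix.linftyOpNormedAlgebra
  set N : Matrix (Fin m) (Fin m) ℂ := A - μ • 1 with hN
  let L₀ : Matrix (Fin m) (Fin m) ℂ →ₗ[ℂ] (Fin m → ℂ) :=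
    { toFun := fun M => M.mulVec x
      map_add' := fun M M' => Matrix.add_mulVec M M' x
      map_smul' := fun c M => Matrix.smul_mulVec c M x }
  let L : Matrix (Fin m) (Fin m) ℂ →L[ℂ] (Fin m → ℂ) := LinearMap.toContinuousLinearMap L₀
  have hexp : ∀ t : ℝ, (NormedSpace.exp ((t : ℂ) • A)).mulVec x
      = ∑ k ∈ Finset.range K,
          (Complex.exp ((t : ℂ) * μ) * (((k.factorial : ℂ))⁻¹ * (t : ℂ) ^ k))
            • (N ^ k).mulVec x := by
    intro t
    have hsplit : (t : ℂ) • A = ((t : ℂ) * μ) • 1 + (t : ℂ) • N := by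
      rw [hN, smul_sub, ← smul_smul]
      abel
    have hcomm : Commute (((t : ℂ) * μ) • (1 : Matrix (Fin m) (Fin m) ℂ)) ((t : ℂ) • N) :=
      ((Commute.one_left _).smul_left _).smul_right _
    have hNk : (NormedSpace.exp ((t : ℂ) • N)).mulVec x
        = ∑ k ∈ Finset.range K, ((((k.factorial : ℂ))⁻¹ * (t : ℂ) ^ k)) • (N ^ k).mulVec x := by
      have h0 : (NormedSpace.exp ((t : ℂ) • N)).mulVec x
          = L (∑' k : ℕ, ((k.factorial : ℂ))⁻¹ • ((t : ℂ) • N) ^ k) := by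
        rw [NormedSpace.exp_eq_tsum (𝕂 := ℂ)]; rfl
      rw [h0, L.map_tsum (NormedSpace.expSeries_summable' ((t : ℂ) • N))]
      have hterm : ∀ k : ℕ, L (((k.factorial : ℂ))⁻¹ • ((t : ℂ) • N) ^ k)
          = ((((k.factorial : ℂ))⁻¹ * (t : ℂ) ^ k)) • (N ^ k).mulVec x := by
        intro k
        have : (((t : ℂ)) • N) ^ k = ((t : ℂ) ^ k) • N ^ k := smul_pow _ _ _
        rw [_root_.map_smul, this]
        show ((k.factorial : ℂ))⁻¹ • (((t : ℂ) ^ k • N ^ k).mulVec x) = _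
        rw [Matrix.smul_mulVec, smul_smul]
      simp_rw [hterm]
      refine tsum_eq_sum ?_
      intro k hk
      have hKk : K ≤ k := by simpa using hk
      have : N ^ k = N ^ (k - K) * N ^ K := by
        rw [← pow_add, Nat.sub_add_cancel hKk]
      rw [this, ← Matrix.mulVec_mulVec, hN] at *
      rw [hx, Matrix.mulVec_zero, smul_zero]
    rw [hsplit, Matrix.exp_add_of_commute _ _ hcomm, exp_smul_one_matrix, smul_one_mul,
      Matrix.smul_mulVec, hNk, Finset.smul_sum]
    simp_rw [smul_smul]
  simp_rw [hexp]
  have htend : Tendsto (fun t : ℝ => ∑ k ∈ Finset.range K,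
      (Complex.exp ((t : ℂ) * μ) * (((k.factorial : ℂ))⁻¹ * (t : ℂ) ^ k)) • (N ^ k).mulVec x)
      atTop (𝓝 (∑ _k ∈ Finset.range K, (0 : Fin m → ℂ))) := by
    apply tendsto_finset_sum
    intro k _
    simpa using (coef_tendsto hμ k).smul_const ((N ^ k).mulVec x)
  simpa using htend

/-- for a Hurwitz matrix `A`, the matrix exponential `exp(t·A)` tends to
zero as `t → ∞`; in particular `exp(t·A)·x₀ → 0` for every vector `x₀`. -/
theorem hurwitz_exp_tendsto_zero (m : ℕ) (A : Matrix (Fin m) (Fin m) ℂ)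
    (hA : IsHurwitz A) :
    Tendsto (fun t : ℝ => NormedSpace.exp ((t : ℂ) • A)) atTop (nhds 0) ∧
    ∀ x₀ : Fin m → ℂ,
      Tendsto (fun t : ℝ => (NormedSpace.exp ((t : ℂ) • A)).mulVec x₀) atTop (nhds 0) := by
  have key : ∀ x₀ : Fin m → ℂ,
      Tendsto (fun t : ℝ => (NormedSpace.exp ((t : ℂ) • A)).mulVec x₀) atTop (𝓝 0) := by
    intro x₀
    set f : Module.End ℂ (Fin m → ℂ) := Matrix.toLinAlgEquiv' A with hf
    set S : Submodule ℂ (Fin m → ℂ) :=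
      { carrier := {x | Tendsto (fun t : ℝ => (NormedSpace.exp ((t : ℂ) • A)).mulVec x)
          atTop (𝓝 0)}
        add_mem' := fun {a b} ha hb => by
          simpa [Matrix.mulVec_add] using Tendsto.add ha hb
        zero_mem' := by simpa [Matrix.mulVec_zero] using (tendsto_const_nhds :
          Tendsto (fun _ : ℝ => (0 : Fin m → ℂ)) atTop (𝓝 0))
        smul_mem' := fun c a ha => by
          simpa [Matrix.mulVec_smul] using Tendsto.const_smul ha c } with hS
    have hle : ∀ μ : ℂ, f.maxGenEigenspace μ ≤ S := by
      intro μ y hy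
      rcases eq_or_ne y 0 with rfl | hy0
      · exact S.zero_mem
      have hy' : y ∈ f.genEigenspace μ (Module.finrank ℂ (Fin m → ℂ)) := by
        rw [← Module.End.maxGenEigenspace_eq_genEigenspace_finrank]
        exact hy
      -- μ is a root of the characteristic polynomial of A
      have hev : f.HasEigenvalue μ :=
        Module.End.hasEigenvalue_of_hasGenEigenvalue (k := Module.finrank ℂ (Fin m → ℂ))
          ((Submodule.ne_bot_iff _).mpr ⟨y, hy', hy0⟩)
      have hcharf : f.charpoly = A.charpoly := by
        rw [← LinearMap.charpoly_toMatrix f (Pi.basisFun ℂ (Fin m))]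
        congr 1
        rw [LinearMap.toMatrix_eq_toMatrix']
        show LinearMap.toMatrix' (Matrix.toLin' A) = A
        exact LinearMap.toMatrix'_toLin' A
      have hroot : A.charpoly.IsRoot μ := by
        have h1 : (minpoly ℂ f).IsRoot μ := Module.End.hasEigenvalue_iff_isRoot.mp hev
        have h2 : minpoly ℂ f ∣ A.charpoly := hcharf ▸ LinearMap.minpoly_dvd_charpoly f
        exact h1.dvd h2
      have hμ : μ.re < 0 := hA μ hroot
      -- translate generalized eigenvector condition to matrices
      have hker : ((f - μ • 1) ^ (Module.finrank ℂ (Fin m → ℂ))) y = 0 := by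
        rw [Module.End.mem_genEigenspace_nat] at hy'
        exact hy'
      have hmat : ((A - μ • 1) ^ (Module.finrank ℂ (Fin m → ℂ))).mulVec y = 0 := by
        have h1 : Matrix.toLinAlgEquiv' (A - μ • 1) = f - μ • 1 := by
          rw [map_sub, _root_.map_smul, _root_.map_one, ← hf]
        have h2 : Matrix.toLinAlgEquiv' ((A - μ • 1) ^ (Module.finrank ℂ (Fin m → ℂ)))
            = (f - μ • 1) ^ (Module.finrank ℂ (Fin m → ℂ)) := by
          rw [map_pow, h1]
        have h3 := hker
        rw [← h2] at h3
        rw [← Matrix.toLinAlgEquiv'_apply]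
        exact h3
      exact exp_mulVec_tendsto A hμ (Module.finrank ℂ (Fin m → ℂ)) y hmat
    have htop : x₀ ∈ (⊤ : Submodule ℂ (Fin m → ℂ)) := Submodule.mem_top
    rw [← Module.End.iSup_maxGenEigenspace_eq_top f] at htop
    exact (iSup_le hle : ⨆ μ, f.maxGenEigenspace μ ≤ S) htop
  refine ⟨?_, key⟩
  apply tendsto_pi_nhds.mpr
  intro i
  apply tendsto_pi_nhds.mpr
  intro j
  have := tendsto_pi_nhds.mp (key (Pi.single j 1)) i
  simpa [Matrix.mulVec_single] using this
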